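/- For each word σ of length k in the free monoid on N generators, define W^p for p = 1,…,k by W_s^{*p} = (1/√2) Σ_{r ∈ J_s} E_{r+p−1, r+p}^{2k}, where J_s = {l ∈ {1,…,k} : i_{k+1−l} = s} and E_{ij}^{2k} are the matrix units amplified by a Hilbert space. Then each W^p lies in B_N(E) (indeed Σ_s W_s^p W_s^{*p} = (1/2)Σ_{r=1}^{k} E_{r+p,r+p}^{2k} < I), and the word-product satisfies W_σ^{*p} = 2^{−k/2} E_{p, k+p}^{2k} while W_τ^p = 0 for every word τ ≠ σ with |τ| ≥ |σ|. -/

import Mathlib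

open scoped ComplexOrder
open Matrix
noncomputable section

namespace MatrixUnitTuplesAux

lemma stdBasisMatrix_conjT {n : ℕ} (i j : Fin n) :
    (single i j (1:ℂ))ᴴ = single j i 1 := by
  ext a b
  simp [conjTranspose_apply, single, apply_ite (star : ℂ → ℂ), and_comm]

/-- Total matrix unit: `Em k a b` is the matrix unit `E_{a b}` of size `2k × 2k`
(or `0` when out of bounds). -/
def Em (k : ℕ) (a b : ℕ) : Matrix (Fin (2*k)) (Fin (2*k)) ℂ :=
  if h : a < 2*k ∧ b < 2*k then single ⟨a, h.1⟩ ⟨b, h.2⟩ 1 else 0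

lemma Em_def {k a b : ℕ} (ha : a < 2*k) (hb : b < 2*k) :
    Em k a b = single ⟨a, ha⟩ ⟨b, hb⟩ 1 := by
  rw [Em, dif_pos ⟨ha, hb⟩]

lemma Em_conjT (k a b : ℕ) : (Em k a b)ᴴ = Em k b a := by
  by_cases h : a < 2*k ∧ b < 2*k
  · rw [Em_def h.1 h.2, Em_def h.2 h.1, stdBasisMatrix_conjT]
  · rw [Em, Em, dif_neg h, dif_neg (fun hh => h ⟨hh.2, hh.1⟩)]
    simp

lemma Em_mul {k a b c d : ℕ} (ha : a < 2*k) (hb : b < 2*k) (hc : c < 2*k) (hd : d < 2*k) :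
    Em k a b * Em k c d = if b = c then Em k a d else 0 := by
  rw [Em_def ha hb, Em_def hc hd]
  by_cases h : b = c
  · subst h
    rw [if_pos rfl, Em_def ha hd]
    simpa using single_mul_single_same (i := (⟨a, ha⟩ : Fin (2*k)))
      (j := (⟨b, hb⟩ : Fin (2*k))) (c := (1:ℂ)) ⟨d, hd⟩ 1
  · rw [if_neg h]
    exact single_mul_single_of_ne (i := (⟨a, ha⟩ : Fin (2*k))) (j := (⟨b, hb⟩ : Fin (2*k))) (c := (1:ℂ)) (k := (⟨c, hc⟩ : Fin (2*k)))
      (fun he => h (congrArg Fin.val he)) 1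

lemma Em_apply {k : ℕ} (a b : ℕ) (i i' : Fin (2*k)) :
    Em k a b i i' = if a = i.1 ∧ b = i'.1 then 1 else 0 := by
  by_cases h : a < 2*k ∧ b < 2*k
  · rw [Em_def h.1 h.2]
    simp [single, Fin.ext_iff]
  · rw [Em, dif_neg h]
    rw [if_neg]
    · rfl
    · rintro ⟨rfl, rfl⟩
      exact h ⟨i.isLt, i'.isLt⟩

/-- The adjoint matrices `W_s^{*p}` without the scalar factor `1/√2`. -/
def Amat {N : ℕ} (k : ℕ) (L : List (Fin N)) (p : ℕ) (s : Fin N) :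
    Matrix (Fin (2*k)) (Fin (2*k)) ℂ :=
  ∑ j ∈ Finset.range k, if L[k-1-j]? = some s then Em k (j+p) (j+p+1) else 0

lemma map_smul_prod {n N : ℕ} (c : ℂ) (f : Fin N → Matrix (Fin n) (Fin n) ℂ) :
    ∀ (M : List (Fin N)), (M.map (fun s => c • f s)).prod = c ^ M.length • (M.map f).prod
  | [] => by simp
  | t :: M => by
    rw [List.map_cons, List.prod_cons, map_smul_prod c f M, List.map_cons, List.prod_cons,
      smul_mul_assoc, mul_smul_comm, smul_smul, List.length_cons, pow_succ, mul_comm]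

/-- Key product formula: the reversed product of the `Amat` matrices along a
nonempty word `M` is a sum of matrix units indexed by positions where the word
matches the pattern from `L`. -/
lemma key {N k : ℕ} (hk : 0 < k) (L : List (Fin N)) (hL : L.length = k)
    (p : ℕ) (hp : p < k) :
    ∀ (M : List (Fin N)), M ≠ [] →
      (M.reverse.map (Amat k L p)).prod =
        ∑ j ∈ Finset.range k,
          if M.length ≤ j+1 ∧ ∀ u < M.length, L[k-1-(j-u)]? = M[u]? then
            Em k (j+1-M.length+p) (j+p+1)
          else 0 := by
  intro M
  induction M with
  | nil => intro h; exact absurd rfl h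
  | cons t M' ih =>
    intro _
    by_cases hM' : M' = []
    · subst hM'
      simp only [List.reverse_cons, List.reverse_nil, List.nil_append, List.map_cons,
        List.map_nil, List.prod_cons, List.prod_nil, mul_one, List.length_cons,
        List.length_nil]
      rw [Amat]
      refine Finset.sum_congr rfl (fun j hj => ?_)
      have hcond : (L[k-1-j]? = some t) ↔ (0+1 ≤ j+1 ∧ ∀ u < 0+1, L[k-1-(j-u)]? = (t :: ([] : List (Fin N)))[u]?) := by
        constructor
        · intro h
          refine ⟨by omega, fun u hu => ?_⟩
          interval_cases u
          simpa using h
        · intro ⟨_, h⟩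
          simpa using h 0 (by omega)
      by_cases hc : L[k-1-j]? = some t
      · rw [if_pos hc, if_pos (hcond.mp hc),
          show j + 1 - (0 + 1) + p = j + p from by omega]
      · rw [if_neg hc, if_neg (fun hh => hc (hcond.mpr hh))]
    · -- step case
      have hrw : (t :: M').reverse.map (Amat k L p)
          = M'.reverse.map (Amat k L p) ++ [Amat k L p t] := by
        simp
      rw [hrw, List.prod_append, List.prod_cons, List.prod_nil, mul_one, ih hM']
      have hm' : 1 ≤ M'.length := List.length_pos_iff.mpr hM'
      -- expand the product termwise
      have expand : ∀ j' ∈ Finset.range k,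
          (if M'.length ≤ j'+1 ∧ ∀ u < M'.length, L[k-1-(j'-u)]? = M'[u]? then
            Em k (j'+1-M'.length+p) (j'+p+1) else 0) * Amat k L p t
          = if (M'.length ≤ j'+1 ∧ ∀ u < M'.length, L[k-1-(j'-u)]? = M'[u]?) ∧
              j'+1 < k ∧ L[k-1-(j'+1)]? = some t then
              Em k (j'+1-M'.length+p) (j'+1+p+1) else 0 := by
        intro j' hj'
        rw [Finset.mem_range] at hj'
        by_cases hC : M'.length ≤ j'+1 ∧ ∀ u < M'.length, L[k-1-(j'-u)]? = M'[u]?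
        · rw [if_pos hC, Amat, Finset.mul_sum]
          have step : ∀ j ∈ Finset.range k,
              Em k (j'+1-M'.length+p) (j'+p+1) *
                (if L[k-1-j]? = some t then Em k (j+p) (j+p+1) else 0)
              = if j = j'+1 then
                  (if L[k-1-j]? = some t then Em k (j'+1-M'.length+p) (j+p+1) else 0)
                else 0 := by
            intro j hj
            rw [Finset.mem_range] at hj
            by_cases hD : L[k-1-j]? = some t
            · rw [if_pos hD]
              rw [Em_mul (by omega) (by omega) (by omega) (by omega)]
              by_cases hjj : j = j'+1
              · rw [if_pos (by omega), if_pos hjj, if_pos hD]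
              · rw [if_neg (by omega), if_neg hjj]
            · rw [if_neg hD, mul_zero]
              by_cases hjj : j = j'+1
              · rw [if_pos hjj, if_neg hD]
              · rw [if_neg hjj]
          rw [Finset.sum_congr rfl step, Finset.sum_ite_eq' (Finset.range k) (j'+1)]
          by_cases hk1 : j'+1 < k
          · rw [if_pos (Finset.mem_range.mpr hk1)]
            by_cases hD : L[k-1-(j'+1)]? = some t
            · rw [if_pos hD, if_pos ⟨hC, hk1, hD⟩]
            · rw [if_neg hD, if_neg (fun hh => hD hh.2.2)]
          · rw [if_neg (fun hh => hk1 (Finset.mem_range.mp hh)),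
              if_neg (fun hh => hk1 hh.2.1)]
        · rw [if_neg hC, zero_mul, if_neg (fun hh => hC hh.1)]
      rw [Finset.sum_mul, Finset.sum_congr rfl expand]
      -- now shift the index
      obtain ⟨K, hK⟩ : ∃ K, k = K + 1 := ⟨k - 1, by omega⟩
      subst hK
      rw [Finset.sum_range_succ, Finset.sum_range_succ']
      have hGK : ¬((M'.length ≤ K+1 ∧ ∀ u < M'.length, L[K+1-1-(K-u)]? = M'[u]?) ∧
          K+1 < K+1 ∧ L[K+1-1-(K+1)]? = some t) := by
        rintro ⟨-, h, -⟩; omega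
      have hR0 : ¬((t :: M').length ≤ 0+1 ∧
          ∀ u < (t :: M').length, L[K+1-1-(0-u)]? = (t :: M')[u]?) := by
        rintro ⟨h1, -⟩; simp only [List.length_cons] at h1; omega
      rw [if_neg hGK, if_neg hR0, add_zero, add_zero]
      refine Finset.sum_congr rfl (fun j' hj' => ?_)
      rw [Finset.mem_range] at hj'
      have hcond : ((M'.length ≤ j'+1 ∧ ∀ u < M'.length, L[(K+1)-1-(j'-u)]? = M'[u]?) ∧
            j'+1 < K+1 ∧ L[(K+1)-1-(j'+1)]? = some t)
          ↔ ((t :: M').length ≤ (j'+1)+1 ∧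
              ∀ u < (t :: M').length, L[(K+1)-1-((j'+1)-u)]? = (t :: M')[u]?) := by
        simp only [List.length_cons]
        constructor
        · rintro ⟨⟨h1, h2⟩, h3, h4⟩
          refine ⟨by omega, fun u hu => ?_⟩
          match u with
          | 0 => simpa using h4
          | v+1 =>
            have hv : j' + 1 - (v+1) = j' - v := by omega
            rw [hv]
            simpa using h2 v (by omega)
        · rintro ⟨h1, h2⟩
          refine ⟨⟨by omega, fun u hu => ?_⟩, by omega, ?_⟩
          · have := h2 (u+1) (by omega)
            have hv : j' + 1 - (u+1) = j' - u := by omega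
            rw [hv] at this
            simpa using this
          · simpa using h2 0 (by omega)
      by_cases hc : (M'.length ≤ j'+1 ∧ ∀ u < M'.length, L[(K+1)-1-(j'-u)]? = M'[u]?) ∧
          j'+1 < K+1 ∧ L[(K+1)-1-(j'+1)]? = some t
      · rw [if_pos hc, if_pos (hcond.mp hc),
          show j' + 1 - M'.length + p = j' + 1 + 1 - (t :: M').length + p from by
            simp only [List.length_cons]; omega]
      · rw [if_neg hc, if_neg (fun hh => hc (hcond.mpr hh))]

lemma sumAdj {N k : ℕ} (L : List (Fin N)) (hL : L.length = k) (p : ℕ) (hp : p < k) :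
    ∑ s : Fin N, (Amat k L p s)ᴴ * Amat k L p s
      = ∑ j ∈ Finset.range k, Em k (j+p+1) (j+p+1) := by
  have hAH : ∀ s : Fin N, (Amat k L p s)ᴴ
      = ∑ j ∈ Finset.range k, if L[k-1-j]? = some s then Em k (j+p+1) (j+p) else 0 := by
    intro s
    rw [Amat, Matrix.conjTranspose_sum]
    refine Finset.sum_congr rfl fun j hj => ?_
    rw [apply_ite conjTranspose, Matrix.conjTranspose_zero, Em_conjT]
  have expand : ∀ s : Fin N, ∀ j' ∈ Finset.range k,
      (if L[k-1-j']? = some s then Em k (j'+p+1) (j'+p) else 0) * Amat k L p s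
        = if L[k-1-j']? = some s then Em k (j'+p+1) (j'+p+1) else 0 := by
    intro s j' hj'
    rw [Finset.mem_range] at hj'
    by_cases hC : L[k-1-j']? = some s
    · rw [if_pos hC, if_pos hC, Amat, Finset.mul_sum]
      have step : ∀ j ∈ Finset.range k,
          Em k (j'+p+1) (j'+p) * (if L[k-1-j]? = some s then Em k (j+p) (j+p+1) else 0)
            = if j = j' then (if L[k-1-j]? = some s then Em k (j'+p+1) (j+p+1) else 0) else 0 := by
        intro j hj
        rw [Finset.mem_range] at hj
        by_cases hD : L[k-1-j]? = some s
        · rw [if_pos hD, Em_mul (by omega) (by omega) (by omega) (by omega)]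
          by_cases hjj : j = j'
          · rw [if_pos (by omega), if_pos hjj, if_pos hD]
          · rw [if_neg (by omega), if_neg hjj]
        · rw [if_neg hD, mul_zero]
          by_cases hjj : j = j'
          · rw [if_pos hjj, if_neg hD]
          · rw [if_neg hjj]
      rw [Finset.sum_congr rfl step, Finset.sum_ite_eq' (Finset.range k) j',
        if_pos (Finset.mem_range.mpr hj'), if_pos hC]
    · rw [if_neg hC, zero_mul, if_neg hC]
  calc ∑ s : Fin N, (Amat k L p s)ᴴ * Amat k L p s
      = ∑ s : Fin N, ∑ j' ∈ Finset.range k,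
          if L[k-1-j']? = some s then Em k (j'+p+1) (j'+p+1) else 0 := by
        refine Finset.sum_congr rfl fun s _ => ?_
        rw [hAH s, Finset.sum_mul, Finset.sum_congr rfl (expand s)]
    _ = ∑ j' ∈ Finset.range k, ∑ s : Fin N,
          if L[k-1-j']? = some s then Em k (j'+p+1) (j'+p+1) else 0 := Finset.sum_comm
    _ = ∑ j' ∈ Finset.range k, Em k (j'+p+1) (j'+p+1) := by
        refine Finset.sum_congr rfl fun j' hj' => ?_
        rw [Finset.mem_range] at hj'
        have hlt : k-1-j' < L.length := by rw [hL]; omega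
        have hrw : ∀ s : Fin N,
            (if L[k-1-j']? = some s then Em k (j'+p+1) (j'+p+1) else 0)
              = if s = L[k-1-j']'hlt then Em k (j'+p+1) (j'+p+1) else 0 := by
          intro s
          refine if_congr ?_ rfl rfl
          rw [List.getElem?_eq_getElem hlt]
          exact ⟨fun h => (Option.some_inj.mp h).symm, fun h => by rw [h]⟩
        rw [Finset.sum_congr rfl fun s _ => hrw s,
          Finset.sum_ite_eq' Finset.univ (L[k-1-j']'hlt), if_pos (Finset.mem_univ _)]

lemma diag_eq {k : ℕ} (p : ℕ) :
    ∑ j ∈ Finset.range k, Em k (j+p+1) (j+p+1)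
      = Matrix.diagonal (fun i : Fin (2*k) => if p+1 ≤ i.1 ∧ i.1 ≤ k+p then (1:ℂ) else 0) := by
  ext i i'
  rw [Matrix.sum_apply]
  by_cases hii : i = i'
  · subst hii
    rw [Matrix.diagonal_apply_eq]
    have : ∀ j ∈ Finset.range k,
        Em k (j+p+1) (j+p+1) i i = if j = i.1 - (p+1) ∧ p+1 ≤ i.1 ∧ i.1 ≤ k+p then (1:ℂ) else 0 := by
      intro j hj
      rw [Finset.mem_range] at hj
      rw [Em_apply]
      refine if_congr ⟨fun h => by omega, fun h => by omega⟩ rfl rfl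
    rw [Finset.sum_congr rfl this]
    by_cases hb : p+1 ≤ i.1 ∧ i.1 ≤ k+p
    · rw [if_pos hb]
      have : ∀ j ∈ Finset.range k,
          (if j = i.1 - (p+1) ∧ p+1 ≤ i.1 ∧ i.1 ≤ k+p then (1:ℂ) else 0)
            = if j = i.1 - (p+1) then (1:ℂ) else 0 := by
        intro j hj
        refine if_congr ⟨fun h => h.1, fun h => ⟨h, hb.1, hb.2⟩⟩ rfl rfl
      rw [Finset.sum_congr rfl this, Finset.sum_ite_eq' (Finset.range k) (i.1 - (p+1)),
        if_pos (Finset.mem_range.mpr (by omega))]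
    · rw [if_neg hb]
      exact Finset.sum_eq_zero fun j hj => if_neg (fun hh => hb hh.2)
  · rw [Matrix.diagonal_apply_ne _ hii]
    refine Finset.sum_eq_zero fun j hj => ?_
    rw [Em_apply, if_neg]
    rintro ⟨h1, h2⟩
    exact hii (Fin.ext (by omega))

lemma posdef {k : ℕ} (p : ℕ) :
    ((1 : Matrix (Fin (2*k)) (Fin (2*k)) ℂ)
      - (1/2:ℂ) • ∑ j ∈ Finset.range k, Em k (j+p+1) (j+p+1)).PosDef := by
  rw [diag_eq p]
  have h1 : (1 : Matrix (Fin (2*k)) (Fin (2*k)) ℂ)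
        - (1/2:ℂ) • Matrix.diagonal (fun i : Fin (2*k) => if p+1 ≤ i.1 ∧ i.1 ≤ k+p then (1:ℂ) else 0)
      = Matrix.diagonal (fun i : Fin (2*k) =>
          1 - (1/2:ℂ) * (if p+1 ≤ i.1 ∧ i.1 ≤ k+p then (1:ℂ) else 0)) := by
    rw [← Matrix.diagonal_one, ← Matrix.diagonal_smul, ← Matrix.diagonal_sub]
    rfl
  rw [h1, Matrix.posDef_diagonal_iff]
  intro i
  by_cases hb : p+1 ≤ i.1 ∧ i.1 ≤ k+p
  · rw [if_pos hb, show (1 : ℂ) - 1/2 * 1 = (((1:ℝ)/2 : ℝ) : ℂ) from by norm_num]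
    exact Complex.zero_lt_real.mpr (by norm_num)
  · rw [if_neg hb, show (1 : ℂ) - 1/2 * 0 = (((1:ℝ) : ℝ) : ℂ) from by norm_num]
    exact Complex.zero_lt_real.mpr (by norm_num)

lemma pow_scalar (k : ℕ) :
    star (((((Real.sqrt 2 : ℝ)) : ℂ))⁻¹ ^ k) = ((((2:ℝ) ^ (-(k:ℝ)/2) : ℝ)) : ℂ) := by
  have h2 : ((2:ℝ) ^ (-(k:ℝ)/2)) = ((Real.sqrt 2)⁻¹)^k := by
    rw [Real.sqrt_eq_rpow, ← Real.rpow_neg_one ((2:ℝ) ^ ((1:ℝ)/2)), ← Real.rpow_natCast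
      (((2:ℝ) ^ ((1:ℝ)/2)) ^ (-1:ℝ)) k, ← Real.rpow_mul (by positivity), ← Real.rpow_mul (by norm_num)]
    congr 1
    push_cast
    ring
  rw [h2]
  push_cast
  rw [star_pow, star_inv₀]
  congr 2
  exact Complex.conj_ofReal _

end MatrixUnitTuplesAux

open MatrixUnitTuplesAux

/-- For a word `σ = i_1⋯i_k` (encoded by the list `L`) in the
free monoid on `N` generators, the tuples `W^p`, `p = 1,…,k`, defined by
`W_s^{*p} = (1/√2) Σ_{r ∈ J_s} E_{r+p−1, r+p}` with
`J_s = {l : i_{k+1−l} = s}`, lie in the open `N`-ball (indeed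
`Σ_s W_s^p W_s^{*p} = (1/2) Σ_{r=1}^k E_{r+p, r+p} < I`), their word product
satisfies `W_σ^{*p} = 2^{−k/2} E_{p, k+p}`, and `W_τ^p = 0` for every word
`τ ≠ σ` with `|τ| ≥ |σ|`. (Matrix units are written with 0-based indices.) -/
theorem matrix_unit_tuples (N k : ℕ) (hk : 0 < k)
    (L : List (Fin N)) (hL : L.length = k)
    (W : Fin k → Fin N → Matrix (Fin (2 * k)) (Fin (2 * k)) ℂ)
    (hW : ∀ (p : Fin k) (s : Fin N),
      (W p s)ᴴ = ((Real.sqrt 2 : ℂ))⁻¹ •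
        ∑ r : Fin k,
          if L.get ⟨k - 1 - r.1, by rw [hL]; have := r.isLt; omega⟩ = s then
            Matrix.single
              (⟨r.1 + p.1, by have := r.isLt; have := p.isLt; omega⟩ : Fin (2 * k))
              (⟨r.1 + p.1 + 1, by have := r.isLt; have := p.isLt; omega⟩ : Fin (2 * k))
              (1 : ℂ)
          else 0) :
    (∀ p : Fin k,
      ∑ s : Fin N, W p s * (W p s)ᴴ =
        ((1 / 2 : ℂ)) • ∑ r : Fin k,
          Matrix.single
            (⟨r.1 + p.1 + 1, by have := r.isLt; have := p.isLt; omega⟩ : Fin (2 * k))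
            (⟨r.1 + p.1 + 1, by have := r.isLt; have := p.isLt; omega⟩ : Fin (2 * k))
            (1 : ℂ)) ∧
    (∀ p : Fin k, (1 - ∑ s : Fin N, W p s * (W p s)ᴴ).PosDef) ∧
    (∀ p : Fin k,
      ((L.map (W p)).prod)ᴴ =
        (((2 : ℝ) ^ (-(k : ℝ) / 2) : ℝ) : ℂ) •
          Matrix.single
            (⟨p.1, by have := p.isLt; omega⟩ : Fin (2 * k))
            (⟨k + p.1, by have := p.isLt; omega⟩ : Fin (2 * k)) (1 : ℂ)) ∧
    (∀ (p : Fin k) (M : List (Fin N)), M ≠ L → k ≤ M.length →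
      (M.map (W p)).prod = 0) := by
  set c : ℂ := (((Real.sqrt 2 : ℝ)) : ℂ)⁻¹ with hcdef
  -- identify the adjoints with the `Amat` matrices
  have hA : ∀ (p : Fin k) (s : Fin N), (W p s)ᴴ = c • Amat k L p.1 s := by
    intro p s
    rw [hW p s]
    congr 1
    rw [Amat, ← Fin.sum_univ_eq_sum_range
      (fun j => if L[k-1-j]? = some s then Em k (j+p.1) (j+p.1+1) else 0) k]
    refine Finset.sum_congr rfl fun r _ => ?_
    have hlt : k-1-r.1 < L.length := by rw [hL]; have := r.isLt; omega
    have h1 : r.1 + p.1 < 2*k := by have := r.isLt; have := p.isLt; omega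
    have h2 : r.1 + p.1 + 1 < 2*k := by have := r.isLt; have := p.isLt; omega
    rw [Em_def h1 h2, List.getElem?_eq_getElem hlt]
    simp only [Option.some.injEq, List.get_eq_getElem]
  have hWs : ∀ (p : Fin k) (s : Fin N), W p s = c • (Amat k L p.1 s)ᴴ := by
    intro p s
    have h := congrArg conjTranspose (hA p s)
    rw [conjTranspose_conjTranspose, Matrix.conjTranspose_smul] at h
    rw [h]
    congr 1
    rw [hcdef, star_inv₀]
    congr 1
    exact Complex.conj_ofReal _
  have hcc : c * c = (1/2 : ℂ) := by
    rw [hcdef, ← mul_inv, ← Complex.ofReal_mul, Real.mul_self_sqrt (by norm_num)]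
    norm_num
  have part1 : ∀ p : Fin k, ∑ s : Fin N, W p s * (W p s)ᴴ
      = (1/2 : ℂ) • ∑ j ∈ Finset.range k, Em k (j+p.1+1) (j+p.1+1) := by
    intro p
    calc ∑ s : Fin N, W p s * (W p s)ᴴ
        = ∑ s : Fin N, (c * c) • ((Amat k L p.1 s)ᴴ * Amat k L p.1 s) := by
          refine Finset.sum_congr rfl fun s _ => ?_
          rw [hA p s, hWs p s, smul_mul_assoc, mul_smul_comm, smul_smul]
      _ = (c * c) • ∑ s : Fin N, (Amat k L p.1 s)ᴴ * Amat k L p.1 s := by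
          rw [Finset.smul_sum]
      _ = (1/2 : ℂ) • ∑ j ∈ Finset.range k, Em k (j+p.1+1) (j+p.1+1) := by
          rw [hcc, sumAdj L hL p.1 p.isLt]
  -- adjoint of a product of adjoints
  have hadj : ∀ (p : Fin k) (M : List (Fin N)),
      ((M.map (fun s => (Amat k L p.1 s)ᴴ)).prod)ᴴ = (M.reverse.map (Amat k L p.1)).prod := by
    intro p M
    rw [Matrix.conjTranspose_list_prod, List.map_map]
    have : (conjTranspose ∘ fun s => (Amat k L p.1 s)ᴴ) = Amat k L p.1 := by
      funext s
      simp [Function.comp]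
    rw [this, ← List.map_reverse]
  refine ⟨?_, ?_, ?_, ?_⟩
  · intro p
    rw [part1 p]
    congr 1
    rw [← Fin.sum_univ_eq_sum_range (fun j => Em k (j+p.1+1) (j+p.1+1)) k]
    refine Finset.sum_congr rfl fun r _ => ?_
    have h2 : r.1 + p.1 + 1 < 2*k := by have := r.isLt; have := p.isLt; omega
    rw [Em_def h2 h2]
  · intro p
    rw [part1 p]
    exact posdef p.1
  · intro p
    have hLmap : L.map (W p) = L.map (fun s => c • (Amat k L p.1 s)ᴴ) :=
      List.map_congr_left (fun s _ => hWs p s)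
    have hLne : L ≠ [] := by
      intro h
      rw [h] at hL
      simp at hL
      omega
    have hkey : (L.reverse.map (Amat k L p.1)).prod = Em k p.1 (k+p.1) := by
      rw [key hk L hL p.1 p.isLt L hLne]
      rw [Finset.sum_eq_single_of_mem (k-1) (Finset.mem_range.mpr (by omega))]
      · have hcond : L.length ≤ (k-1)+1 ∧ ∀ u < L.length, L[k-1-((k-1)-u)]? = L[u]? := by
          refine ⟨by omega, fun u hu => ?_⟩
          rw [hL] at hu
          rw [show k-1-((k-1)-u) = u from by omega]
        rw [if_pos hcond, hL, show k-1+1-k+p.1 = p.1 from by omega,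
          show k-1+p.1+1 = k+p.1 from by omega]
      · intro j hjr hjne
        rw [Finset.mem_range] at hjr
        rw [if_neg]
        rintro ⟨h1, -⟩
        rw [hL] at h1
        exact hjne (by omega)
    rw [hLmap, map_smul_prod, Matrix.conjTranspose_smul, hadj p L, hkey,
      show c ^ L.length = c ^ k from by rw [hL], hcdef, pow_scalar]
    have hp1 : p.1 < 2*k := by have := p.isLt; omega
    have hp2 : k + p.1 < 2*k := by have := p.isLt; omega
    rw [Em_def hp1 hp2]
  · intro p M hML hkM
    have hMne : M ≠ [] := by
      intro h
      rw [h] at hkM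
      simp at hkM
      omega
    have hMmap : M.map (W p) = M.map (fun s => c • (Amat k L p.1 s)ᴴ) :=
      List.map_congr_left (fun s _ => hWs p s)
    rw [hMmap, map_smul_prod]
    have h0 : (M.reverse.map (Amat k L p.1)).prod = 0 := by
      rw [key hk L hL p.1 p.isLt M hMne]
      refine Finset.sum_eq_zero fun j hj => ?_
      rw [Finset.mem_range] at hj
      rw [if_neg]
      rintro ⟨h1, h2⟩
      have hMk : M.length = k := by omega
      have hjk : j = k-1 := by omega
      subst hjk
      apply hML
      refine List.ext_getElem? fun n => ?_
      by_cases hn : n < k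
      · have h3 := h2 n (by omega)
        rw [show k-1-((k-1)-n) = n from by omega] at h3
        exact h3.symm
      · rw [List.getElem?_eq_none (by omega), List.getElem?_eq_none (by rw [hL]; omega)]
    have hz : (M.map (fun s => (Amat k L p.1 s)ᴴ)).prod = 0 := by
      have := congrArg conjTranspose ((hadj p M).trans h0)
      rwa [conjTranspose_conjTranspose, Matrix.conjTranspose_zero] at this
    rw [hz, smul_zero]
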